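/- The birational map $T:(x,y)\mapsto\left(x\frac{b^2-bx+by+xy}{b^2-bx-by-xy},\; y\frac{b+x}{b-x}\right)$ with $b\ne 0$ has infinite order: its iterates satisfy $T^k(x,y)=\left(x+\frac{2k}{b}xy,\,y+\frac{2k}{b}xy\right)+o((x+y)^2)$ near the origin; in particular no power of $T$ is the identity. -/

import Mathlib

open Asymptotics Filter

private noncomputable def lF : Filter (ℝ × ℝ) := nhds ((0, 0) : ℝ × ℝ)

private lemma lfstO : (fun p : ℝ × ℝ => p.1) =O[lF] fun p => ‖p‖ :=
  isBigO_of_le _ fun p => by simpa using norm_fst_le p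

private lemma lsndO : (fun p : ℝ × ℝ => p.2) =O[lF] fun p => ‖p‖ :=
  isBigO_of_le _ fun p => by simpa using norm_snd_le p

private lemma lsqO : (fun p : ℝ × ℝ => p.1 * p.2) =O[lF] fun p => ‖p‖ ^ 2 := by
  simpa [pow_two] using lfstO.mul lsndO

private lemma tendsto_fst0 : Tendsto (fun p : ℝ × ℝ => p.1) lF (nhds 0) := by
  simpa [lF] using (continuous_fst : Continuous fun p : ℝ × ℝ => p.1).tendsto ((0, 0) : ℝ × ℝ)

private lemma tendsto_snd0 : Tendsto (fun p : ℝ × ℝ => p.2) lF (nhds 0) := by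
  simpa [lF] using (continuous_snd : Continuous fun p : ℝ × ℝ => p.2).tendsto ((0, 0) : ℝ × ℝ)

private lemma base_littleo (b : ℝ) (hb : b ≠ 0) (T : ℝ × ℝ → ℝ × ℝ)
    (hT : ∀ p : ℝ × ℝ, T p =
      (p.1 * (b ^ 2 - b * p.1 + b * p.2 + p.1 * p.2) /
          (b ^ 2 - b * p.1 - b * p.2 - p.1 * p.2),
       p.2 * (b + p.1) / (b - p.1))) :
    (fun q : ℝ × ℝ => T q - (q.1 + 2 / b * (q.1 * q.2), q.2 + 2 / b * (q.1 * q.2)))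
      =o[lF] fun q => ‖q‖ ^ 2 := by
  have hD1 : Tendsto (fun q : ℝ × ℝ => b ^ 2 - b * q.1 - b * q.2 - q.1 * q.2) lF
      (nhds (b ^ 2)) := by
    have hc : Continuous fun q : ℝ × ℝ => b ^ 2 - b * q.1 - b * q.2 - q.1 * q.2 := by
      fun_prop
    simpa [lF] using hc.tendsto ((0, 0) : ℝ × ℝ)
  have hD2 : Tendsto (fun q : ℝ × ℝ => b - q.1) lF (nhds b) := by
    have hc : Continuous fun q : ℝ × ℝ => b - q.1 := by fun_prop
    simpa [lF] using hc.tendsto ((0, 0) : ℝ × ℝ)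
  have hne1 : ∀ᶠ q in lF, b ^ 2 - b * q.1 - b * q.2 - q.1 * q.2 ≠ 0 :=
    hD1.eventually_ne (pow_ne_zero 2 hb)
  have hne2 : ∀ᶠ q in lF, b - q.1 ≠ 0 := hD2.eventually_ne hb
  set R : ℝ × ℝ → ℝ × ℝ := fun q =>
    ((b ^ 2 - b * q.1 - b * q.2 - q.1 * q.2)⁻¹ *
        ((4 * q.1 + 2 * q.2 + 2 / b * (q.1 * q.2)) * (q.1 * q.2)),
      (b - q.1)⁻¹ * ((2 / b * q.1) * (q.1 * q.2))) with hR
  have hRo : R =o[lF] fun q => ‖q‖ ^ 2 := by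
    have hinv1 : (fun q : ℝ × ℝ => (b ^ 2 - b * q.1 - b * q.2 - q.1 * q.2)⁻¹)
        =O[lF] (fun _ => (1 : ℝ)) :=
      (hD1.inv₀ (pow_ne_zero 2 hb)).isBigO_one ℝ
    have hinv2 : (fun q : ℝ × ℝ => (b - q.1)⁻¹) =O[lF] (fun _ => (1 : ℝ)) :=
      (hD2.inv₀ hb).isBigO_one ℝ
    have hf1 : (fun q : ℝ × ℝ => 4 * q.1 + 2 * q.2 + 2 / b * (q.1 * q.2))
        =o[lF] (fun _ => (1 : ℝ)) := by
      rw [isLittleO_one_iff]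
      have := (((tendsto_fst0.const_mul 4).add (tendsto_snd0.const_mul 2)).add
        ((tendsto_fst0.mul tendsto_snd0).const_mul (2 / b)))
      simpa using this
    have hf2 : (fun q : ℝ × ℝ => 2 / b * q.1) =o[lF] (fun _ => (1 : ℝ)) := by
      rw [isLittleO_one_iff]
      simpa using tendsto_fst0.const_mul (2 / b)
    have h1 : (fun q : ℝ × ℝ => (b ^ 2 - b * q.1 - b * q.2 - q.1 * q.2)⁻¹ *
        ((4 * q.1 + 2 * q.2 + 2 / b * (q.1 * q.2)) * (q.1 * q.2)))
        =o[lF] fun q => ‖q‖ ^ 2 := by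
      simpa using hinv1.mul_isLittleO (hf1.mul_isBigO lsqO)
    have h2 : (fun q : ℝ × ℝ => (b - q.1)⁻¹ * ((2 / b * q.1) * (q.1 * q.2)))
        =o[lF] fun q => ‖q‖ ^ 2 := by
      simpa using hinv2.mul_isLittleO (hf2.mul_isBigO lsqO)
    exact h1.prod_left h2
  refine hRo.congr' ?_ (EventuallyEq.rfl)
  filter_upwards [hne1, hne2] with q h1 h2
  rw [hR, hT q]
  have : ∀ a c d e : ℝ, ((a, c) : ℝ × ℝ) - (d, e) = (a - d, c - e) := fun _ _ _ _ => rfl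
  rw [Prod.ext_iff]
  constructor
  · simp only [Prod.fst_sub]
    rw [inv_mul_eq_iff_eq_mul₀ h1, mul_sub, mul_div_cancel₀ _ h1]
    field_simp
    ring
  · simp only [Prod.snd_sub]
    field_simp
    ring

private lemma norm_sq_O1 : (fun p : ℝ × ℝ => ‖p‖ ^ 2) =o[lF] (fun _ => (1 : ℝ)) := by
  rw [isLittleO_one_iff]
  have : Tendsto (fun p : ℝ × ℝ => ‖p‖) lF (nhds 0) := by
    have : Continuous fun p : ℝ × ℝ => ‖p‖ := continuous_norm
    simpa [lF] using this.tendsto ((0, 0) : ℝ × ℝ)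
  simpa using this.pow 2

private lemma key (b : ℝ) (hb : b ≠ 0) (T : ℝ × ℝ → ℝ × ℝ)
    (hT : ∀ p : ℝ × ℝ, T p =
      (p.1 * (b ^ 2 - b * p.1 + b * p.2 + p.1 * p.2) /
          (b ^ 2 - b * p.1 - b * p.2 - p.1 * p.2),
       p.2 * (b + p.1) / (b - p.1))) (k : ℕ) :
    (fun p : ℝ × ℝ => T^[k] p -
        (p.1 + (2 * k / b) * p.1 * p.2, p.2 + (2 * k / b) * p.1 * p.2))
      =o[lF] fun p => ‖p‖ ^ 2 := by
  induction k with
  | zero =>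
    have : (fun p : ℝ × ℝ => T^[0] p -
        (p.1 + (2 * (0 : ℕ) / b) * p.1 * p.2, p.2 + (2 * (0 : ℕ) / b) * p.1 * p.2))
        = fun _ => (0 : ℝ × ℝ) := by
      funext p
      simp [Prod.ext_iff]
    rw [this]
    exact isLittleO_zero _ _
  | succ k IH =>
    set a : ℝ := 2 * k / b with ha
    set e : ℝ × ℝ → ℝ × ℝ := fun p =>
      T^[k] p - (p.1 + a * p.1 * p.2, p.2 + a * p.1 * p.2) with he
    -- components of e
    have he1 : (fun p => (e p).1) =o[lF] fun p => ‖p‖ ^ 2 :=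
      (isBigO_of_le lF fun p => by simpa using norm_fst_le (e p)).trans_isLittleO IH
    have he2 : (fun p => (e p).2) =o[lF] fun p => ‖p‖ ^ 2 :=
      (isBigO_of_le lF fun p => by simpa using norm_snd_le (e p)).trans_isLittleO IH
    -- u i = q i - p i
    set u1 : ℝ × ℝ → ℝ := fun p => a * p.1 * p.2 + (e p).1 with hu1
    set u2 : ℝ × ℝ → ℝ := fun p => a * p.1 * p.2 + (e p).2 with hu2
    have hq1 : ∀ p : ℝ × ℝ, (T^[k] p).1 = p.1 + u1 p := fun p => by
      simp [hu1, he]; ring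
    have hq2 : ∀ p : ℝ × ℝ, (T^[k] p).2 = p.2 + u2 p := fun p => by
      simp [hu2, he]; ring
    have hu1O : u1 =O[lF] fun p => ‖p‖ ^ 2 := by
      have : (fun p : ℝ × ℝ => a * p.1 * p.2) =O[lF] fun p => ‖p‖ ^ 2 := by
        simpa [mul_assoc] using lsqO.const_mul_left a
      exact this.add he1.isBigO
    have hu2O : u2 =O[lF] fun p => ‖p‖ ^ 2 := by
      have : (fun p : ℝ × ℝ => a * p.1 * p.2) =O[lF] fun p => ‖p‖ ^ 2 := by
        simpa [mul_assoc] using lsqO.const_mul_left a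
      exact this.add he2.isBigO
    have hu1o1 : u1 =o[lF] (fun _ => (1 : ℝ)) := hu1O.trans_isLittleO norm_sq_O1
    have hu2o1 : u2 =o[lF] (fun _ => (1 : ℝ)) := hu2O.trans_isLittleO norm_sq_O1
    have hfsto1 : (fun p : ℝ × ℝ => p.1) =o[lF] (fun _ => (1 : ℝ)) :=
      (isLittleO_one_iff ℝ).2 tendsto_fst0
    have hsndo1 : (fun p : ℝ × ℝ => p.2) =o[lF] (fun _ => (1 : ℝ)) :=
      (isLittleO_one_iff ℝ).2 tendsto_snd0
    -- B = q1 q2 - x y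
    have hB : (fun p : ℝ × ℝ => (T^[k] p).1 * (T^[k] p).2 - p.1 * p.2)
        =o[lF] fun p => ‖p‖ ^ 2 := by
      have heqB : (fun p : ℝ × ℝ => (T^[k] p).1 * (T^[k] p).2 - p.1 * p.2)
          = fun p => p.1 * u2 p + p.2 * u1 p + u1 p * u2 p := by
        funext p
        rw [hq1 p, hq2 p]; ring
      rw [heqB]
      have t1 : (fun p : ℝ × ℝ => p.1 * u2 p) =o[lF] fun p => ‖p‖ ^ 2 := by
        simpa using hfsto1.mul_isBigO hu2O
      have t2 : (fun p : ℝ × ℝ => p.2 * u1 p) =o[lF] fun p => ‖p‖ ^ 2 := by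
        simpa using hsndo1.mul_isBigO hu1O
      have t3 : (fun p : ℝ × ℝ => u1 p * u2 p) =o[lF] fun p => ‖p‖ ^ 2 := by
        simpa using hu1o1.mul_isBigO hu2O
      exact (t1.add t2).add t3
    -- q tends to (0,0)
    have hq0 : Tendsto (fun p : ℝ × ℝ => T^[k] p) lF lF := by
      have h1 : Tendsto (fun p : ℝ × ℝ => (T^[k] p).1) lF (nhds 0) := by
        have := tendsto_fst0.add ((isLittleO_one_iff ℝ).1
          (hu1O.trans_isLittleO norm_sq_O1))
        simp only [add_zero] at this
        exact this.congr fun p => (hq1 p).symm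
      have h2 : Tendsto (fun p : ℝ × ℝ => (T^[k] p).2) lF (nhds 0) := by
        have := tendsto_snd0.add ((isLittleO_one_iff ℝ).1
          (hu2O.trans_isLittleO norm_sq_O1))
        simp only [add_zero] at this
        exact this.congr fun p => (hq2 p).symm
      have h3 : Tendsto (fun p : ℝ × ℝ => ((T^[k] p).1, (T^[k] p).2)) lF
          (nhds ((0, 0) : ℝ × ℝ)) := by
        rw [nhds_prod_eq]; exact h1.prodMk h2
      exact h3
    -- ‖q p‖^2 = O(‖p‖^2)
    have hnorm21 : (fun p : ℝ × ℝ => ‖p‖ ^ 2) =O[lF] fun p => ‖p‖ := by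
      rw [isBigO_iff]
      refine ⟨1, ?_⟩
      have hball : ∀ᶠ p : ℝ × ℝ in lF, ‖p‖ < 1 := by
        have : Tendsto (fun p : ℝ × ℝ => ‖p‖) lF (nhds 0) := by
          have hc : Continuous fun p : ℝ × ℝ => ‖p‖ := continuous_norm
          simpa [lF] using hc.tendsto ((0, 0) : ℝ × ℝ)
        exact this.eventually_lt_const one_pos
      filter_upwards [hball] with p hp
      have h0 : (0 : ℝ) ≤ ‖p‖ := norm_nonneg p
      rw [Real.norm_of_nonneg (by positivity), Real.norm_of_nonneg h0]
      nlinarith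
    have hqO : (fun p : ℝ × ℝ => T^[k] p) =O[lF] fun p => ‖p‖ := by
      have h1 : (fun p : ℝ × ℝ => (T^[k] p).1) =O[lF] fun p => ‖p‖ := by
        have := lfstO.add (hu1O.trans hnorm21)
        exact (this.congr_left fun p => (hq1 p).symm)
      have h2 : (fun p : ℝ × ℝ => (T^[k] p).2) =O[lF] fun p => ‖p‖ := by
        have := lsndO.add (hu2O.trans hnorm21)
        exact (this.congr_left fun p => (hq2 p).symm)
      exact (h1.prod_left h2).congr_left fun p => rfl
    have hqsq : (fun p : ℝ × ℝ => ‖T^[k] p‖ ^ 2) =O[lF] fun p => ‖p‖ ^ 2 :=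
      hqO.norm_left.pow 2
    -- G part
    have hG : (fun p : ℝ × ℝ => T (T^[k] p) -
        ((T^[k] p).1 + 2 / b * ((T^[k] p).1 * (T^[k] p).2),
         (T^[k] p).2 + 2 / b * ((T^[k] p).1 * (T^[k] p).2)))
        =o[lF] fun p => ‖p‖ ^ 2 := by
      have := (base_littleo b hb T hT).comp_tendsto hq0
      exact this.trans_isBigO hqsq
    -- H part
    have hH : (fun p : ℝ × ℝ =>
        ((T^[k] p).1 + 2 / b * ((T^[k] p).1 * (T^[k] p).2),
         (T^[k] p).2 + 2 / b * ((T^[k] p).1 * (T^[k] p).2)) -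
        (p.1 + (2 * (k + 1 : ℕ) / b) * p.1 * p.2,
         p.2 + (2 * (k + 1 : ℕ) / b) * p.1 * p.2))
        =o[lF] fun p => ‖p‖ ^ 2 := by
      have hcast : (2 * ((k : ℝ) + 1) / b) = a + 2 / b := by
        rw [ha]; ring
      have hcomp1 : ∀ p : ℝ × ℝ,
          (T^[k] p).1 + 2 / b * ((T^[k] p).1 * (T^[k] p).2) -
            (p.1 + (2 * (k + 1 : ℕ) / b) * p.1 * p.2)
          = (e p).1 + 2 / b * ((T^[k] p).1 * (T^[k] p).2 - p.1 * p.2) := by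
        intro p
        have h1 : (e p).1 = (T^[k] p).1 - (p.1 + a * p.1 * p.2) := by simp [he]
        push_cast
        rw [hcast, h1]; ring
      have hcomp2 : ∀ p : ℝ × ℝ,
          (T^[k] p).2 + 2 / b * ((T^[k] p).1 * (T^[k] p).2) -
            (p.2 + (2 * (k + 1 : ℕ) / b) * p.1 * p.2)
          = (e p).2 + 2 / b * ((T^[k] p).1 * (T^[k] p).2 - p.1 * p.2) := by
        intro p
        have h2 : (e p).2 = (T^[k] p).2 - (p.2 + a * p.1 * p.2) := by simp [he]
        push_cast
        rw [hcast, h2]; ring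
      have hcomp : (fun p : ℝ × ℝ =>
          ((T^[k] p).1 + 2 / b * ((T^[k] p).1 * (T^[k] p).2),
           (T^[k] p).2 + 2 / b * ((T^[k] p).1 * (T^[k] p).2)) -
          (p.1 + (2 * (k + 1 : ℕ) / b) * p.1 * p.2,
           p.2 + (2 * (k + 1 : ℕ) / b) * p.1 * p.2))
          = fun p => ((e p).1 + 2 / b * ((T^[k] p).1 * (T^[k] p).2 - p.1 * p.2),
              (e p).2 + 2 / b * ((T^[k] p).1 * (T^[k] p).2 - p.1 * p.2)) := by
        funext p
        rw [Prod.ext_iff]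
        exact ⟨hcomp1 p, hcomp2 p⟩
      rw [hcomp]
      have hBc := hB.const_mul_left (2 / b)
      exact (he1.add hBc).prod_left (he2.add hBc)
    have hsplit : (fun p : ℝ × ℝ => T^[k + 1] p -
        (p.1 + (2 * (k + 1 : ℕ) / b) * p.1 * p.2,
         p.2 + (2 * (k + 1 : ℕ) / b) * p.1 * p.2))
        = fun p : ℝ × ℝ =>
          (T (T^[k] p) -
            ((T^[k] p).1 + 2 / b * ((T^[k] p).1 * (T^[k] p).2),
             (T^[k] p).2 + 2 / b * ((T^[k] p).1 * (T^[k] p).2))) +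
          (((T^[k] p).1 + 2 / b * ((T^[k] p).1 * (T^[k] p).2),
            (T^[k] p).2 + 2 / b * ((T^[k] p).1 * (T^[k] p).2)) -
           (p.1 + (2 * (k + 1 : ℕ) / b) * p.1 * p.2,
            p.2 + (2 * (k + 1 : ℕ) / b) * p.1 * p.2)) := by
      funext p
      rw [Function.iterate_succ_apply', sub_add_sub_cancel]
    rw [hsplit]
    exact hG.add hH

theorem stmt8 (b : ℝ) (hb : b ≠ 0) (T : ℝ × ℝ → ℝ × ℝ)
    (hT : ∀ p : ℝ × ℝ, T p =
      (p.1 * (b ^ 2 - b * p.1 + b * p.2 + p.1 * p.2) /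
          (b ^ 2 - b * p.1 - b * p.2 - p.1 * p.2),
       p.2 * (b + p.1) / (b - p.1))) :
    (∀ k : ℕ, Asymptotics.IsLittleO (nhds ((0, 0) : ℝ × ℝ))
        (fun p : ℝ × ℝ => T^[k] p -
          (p.1 + (2 * k / b) * p.1 * p.2, p.2 + (2 * k / b) * p.1 * p.2))
        (fun p : ℝ × ℝ => ‖p‖ ^ 2)) ∧
    (∀ k : ℕ, 1 ≤ k → ∃ p : ℝ × ℝ, T^[k] p ≠ p) := by
  constructor
  · intro k
    exact key b hb T hT k
  · intro k hk
    by_contra hcon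
    push_neg at hcon
    set a : ℝ := 2 * k / b with ha
    have hane : a ≠ 0 := by
      rw [ha]
      apply div_ne_zero _ hb
      have : (k : ℝ) ≠ 0 := Nat.cast_ne_zero.2 (by omega)
      positivity
    have h2 := key b hb T hT k
    have hphi : Tendsto (fun t : ℝ => ((t, t) : ℝ × ℝ)) (nhds 0) lF := by
      have : Continuous fun t : ℝ => ((t, t) : ℝ × ℝ) := by fun_prop
      simpa [lF] using this.tendsto 0
    have h3 := h2.comp_tendsto hphi
    simp only [Function.comp_def] at h3
    rw [Asymptotics.isLittleO_iff] at h3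
    have h4 := h3 (c := |a| / 2) (by positivity)
    rw [Metric.eventually_nhds_iff] at h4
    obtain ⟨ε, hε, hball⟩ := h4
    have ht := hball (y := ε / 2) (by
      rw [Real.dist_eq, sub_zero, abs_of_pos (half_pos hε)]
      linarith)
    set t : ℝ := ε / 2 with htdef
    rw [hcon (t, t)] at ht
    have hnorm1 : ‖((t, t) : ℝ × ℝ)‖ = |t| := by
      rw [Prod.norm_def]
      simp [Real.norm_eq_abs]
    have hlhs : ((t, t) : ℝ × ℝ) - (t + a * t * t, t + a * t * t)
        = (-(a * t ^ 2), -(a * t ^ 2)) := by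
      rw [Prod.ext_iff]
      constructor <;> simp <;> ring
    rw [hlhs] at ht
    have hlhsn : ‖((-(a * t ^ 2), -(a * t ^ 2)) : ℝ × ℝ)‖ = |a| * t ^ 2 := by
      rw [Prod.norm_def]
      simp [Real.norm_eq_abs, abs_mul, sq_abs, abs_of_nonneg (sq_nonneg t)]
    rw [hlhsn, hnorm1] at ht
    have ht2 : (0 : ℝ) < t ^ 2 := by positivity
    have : ‖|t| ^ 2‖ = t ^ 2 := by
      rw [Real.norm_of_nonneg (by positivity), sq_abs]
    rw [this] at ht
    nlinarith [abs_pos.2 hane]
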